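/- Let s₁, …, s_k be distinct nonzero real numbers. Then there exists a constant C > 0 (depending only on s₁, …, s_k) such that: for all pairwise disjoint finite symmetric sets A^{(1)}, …, A^{(k)} ⊂ ℤ\{0} and every K ≥ 1 with Σ_{j=1}^k s_j 1̂_{A^{(j)}}(x) + K ≥ 0 for all x ∈ 𝕋, one has ‖1̂_{A^{(1)}}‖₁ ≤ C·K^k. -/

import Mathlib

/-- `e(x) = e^{2πix}`. -/
noncomputable def eC (x : ℝ) : ℂ := Complex.exp (2 * Real.pi * Complex.I * x)

/-- `1̂_A(x) = ∑_{a ∈ A} e(ax)`. -/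
noncomputable def fhat (A : Finset ℤ) (x : ℝ) : ℂ := ∑ a ∈ A, eC ((a : ℝ) * x)

lemma continuous_eC : Continuous eC := by
  unfold eC; fun_prop

lemma continuous_fhat (A : Finset ℤ) : Continuous (fhat A) := by
  unfold fhat
  exact continuous_finset_sum _ fun a _ => continuous_eC.comp (by fun_prop)

lemma eC_add (x y : ℝ) : eC (x + y) = eC x * eC y := by
  simp only [eC, ← Complex.exp_add]
  push_cast; ring_nf

lemma eC_int (a : ℤ) : eC a = 1 := by
  have := Complex.exp_int_mul_two_pi_mul_I a
  simp only [eC]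
  rw [show 2 * (Real.pi : ℂ) * Complex.I * (a:ℝ) = (a:ℂ) * (2 * Real.pi * Complex.I) by push_cast; ring]
  exact this

lemma integral_eC (a : ℤ) : (∫ x in (0:ℝ)..1, eC (a * x)) = if a = 0 then 1 else 0 := by
  by_cases ha : a = 0
  · simp [ha, eC]
  · have hc : (2 * (Real.pi:ℂ) * Complex.I * a) ≠ 0 := by
      have hpi : ((Real.pi:ℂ)) ≠ 0 := by exact_mod_cast Real.pi_ne_zero
      have haC : ((a:ℂ)) ≠ 0 := by exact_mod_cast ha
      exact mul_ne_zero (mul_ne_zero (mul_ne_zero two_ne_zero hpi) Complex.I_ne_zero) haC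
    have heq : ∀ x : ℝ, eC ((a:ℝ) * x) = Complex.exp ((2 * (Real.pi:ℂ) * Complex.I * a) * x) := by
      intro x; simp only [eC]; push_cast; ring_nf
    rw [if_neg ha]
    simp_rw [heq]
    rw [integral_exp_mul_complex hc]
    have h1 : (2 * (Real.pi:ℂ) * Complex.I * a) * ((1:ℝ):ℂ) = (a:ℂ)*(2*Real.pi*Complex.I) := by
      push_cast; ring
    have h0 : (2 * (Real.pi:ℂ) * Complex.I * a) * ((0:ℝ):ℂ) = 0 := by push_cast; ring
    rw [h1, h0, Complex.exp_int_mul_two_pi_mul_I a, Complex.exp_zero]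
    simp

lemma fhat_periodic (A : Finset ℤ) : Function.Periodic (fhat A) 1 := by
  intro x
  unfold fhat
  refine Finset.sum_congr rfl fun a _ => ?_
  rw [mul_add, mul_one, eC_add, eC_int, mul_one]

lemma intervalIntegrable_of_continuous {f : ℝ → ℂ} (hf : Continuous f) :
    IntervalIntegrable f MeasureTheory.volume 0 1 :=
  hf.intervalIntegrable 0 1

lemma conv_fhat (B C : Finset ℤ) (x : ℝ) :
    (∫ y in (0:ℝ)..1, fhat B (x - y) * fhat C y) = fhat (B ∩ C) x := by
  have expand : ∀ y : ℝ, fhat B (x - y) * fhat C y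
      = ∑ a ∈ B, ∑ b ∈ C, eC ((a:ℝ) * x) * eC (((b - a : ℤ) : ℝ) * y) := by
    intro y
    unfold fhat
    rw [Finset.sum_mul_sum]
    refine Finset.sum_congr rfl fun a _ => Finset.sum_congr rfl fun b _ => ?_
    rw [← eC_add, ← eC_add]
    congr 1
    push_cast; ring
  simp_rw [expand]
  rw [intervalIntegral.integral_finset_sum]
  · have inner : ∀ a ∈ B, (∫ y in (0:ℝ)..1, ∑ b ∈ C, eC ((a:ℝ) * x) * eC (((b - a : ℤ) : ℝ) * y))
        = if a ∈ C then eC ((a:ℝ) * x) else 0 := by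
      intro a _
      rw [intervalIntegral.integral_finset_sum]
      · have : ∀ b ∈ C, (∫ y in (0:ℝ)..1, eC ((a:ℝ) * x) * eC (((b - a : ℤ) : ℝ) * y))
            = if a = b then eC ((a:ℝ)*x) else 0 := by
          intro b _
          rw [intervalIntegral.integral_const_mul, integral_eC (b - a)]
          by_cases h : a = b
          · simp [h]
          · rw [if_neg (fun hh => h (by omega)), if_neg h, mul_zero]
        rw [Finset.sum_congr rfl this, Finset.sum_ite_eq C a (fun _ => eC ((a:ℝ)*x))]
      · intro b _
        exact (continuous_const.mul (continuous_eC.comp (by fun_prop))).intervalIntegrable 0 1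
    rw [Finset.sum_congr rfl inner, Finset.sum_ite_mem]
    unfold fhat
    rfl
  · intro a _
    exact (continuous_finset_sum _ fun b _ =>
      continuous_const.mul (continuous_eC.comp (by fun_prop))).intervalIntegrable 0 1

lemma periodic_norm {g : ℝ → ℂ} (hg : Function.Periodic g 1) :
    Function.Periodic (fun x => ‖g x‖) 1 := fun x => by simp [hg x]

lemma shift_integral_norm {g : ℝ → ℂ} (hg : Function.Periodic g 1) (y : ℝ) :
    (∫ x in (0:ℝ)..1, ‖g (x - y)‖) = ∫ x in (0:ℝ)..1, ‖g x‖ := by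
  rw [intervalIntegral.integral_comp_sub_right (fun x => ‖g x‖) y]
  have := (periodic_norm hg).intervalIntegral_add_eq (-y) 0
  simpa [zero_sub, sub_eq_add_neg, add_comm] using this

lemma conv_l1 (g h : ℝ → ℂ) (hg : Continuous g) (hh : Continuous h)
    (hgp : Function.Periodic g 1) :
    (∫ x in (0:ℝ)..1, ‖∫ y in (0:ℝ)..1, g (x - y) * h y‖) ≤
      (∫ x in (0:ℝ)..1, ‖g x‖) * (∫ y in (0:ℝ)..1, ‖h y‖) := by
  set I : Set ℝ := Set.Ioc (0:ℝ) 1 with hI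
  set μ : MeasureTheory.Measure ℝ := MeasureTheory.volume.restrict I with hμ
  set φ : ℝ × ℝ → ℝ := fun p => ‖g (p.1 - p.2)‖ * ‖h p.2‖ with hφ
  have hφc : Continuous φ := by
    apply Continuous.mul
    · exact (hg.comp (continuous_fst.sub continuous_snd)).norm
    · exact (hh.comp continuous_snd).norm
  have hφi : MeasureTheory.Integrable φ (μ.prod μ) := by
    rw [hμ, MeasureTheory.Measure.prod_restrict]
    have hcomp : IsCompact (Set.Icc (0:ℝ) 1 ×ˢ Set.Icc (0:ℝ) 1) :=
      isCompact_Icc.prod isCompact_Icc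
    have : MeasureTheory.IntegrableOn φ (Set.Icc (0:ℝ) 1 ×ˢ Set.Icc (0:ℝ) 1)
        (MeasureTheory.volume.prod MeasureTheory.volume) := by
      rw [← MeasureTheory.Measure.volume_eq_prod]
      exact hφc.continuousOn.integrableOn_compact hcomp
    exact this.mono_set (Set.prod_mono Set.Ioc_subset_Icc_self Set.Ioc_subset_Icc_self)
  have hu : MeasureTheory.Integrable (fun x => ∫ y, φ (x, y) ∂μ) μ := hφi.integral_prod_left
  rw [intervalIntegral.integral_of_le zero_le_one, ← hI, ← hμ]
  have step2 : (∫ x, ‖∫ y in (0:ℝ)..1, g (x - y) * h y‖ ∂μ) ≤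
      ∫ x, (∫ y, φ (x, y) ∂μ) ∂μ := by
    apply MeasureTheory.integral_mono_of_nonneg
    · exact Filter.Eventually.of_forall fun x => norm_nonneg _
    · exact hu
    · refine Filter.Eventually.of_forall fun x => ?_
      calc ‖∫ y in (0:ℝ)..1, g (x - y) * h y‖
          ≤ ∫ y in (0:ℝ)..1, ‖g (x - y) * h y‖ :=
            intervalIntegral.norm_integral_le_integral_norm zero_le_one
        _ = ∫ y, φ (x, y) ∂μ := by
            rw [intervalIntegral.integral_of_le zero_le_one, ← hI, ← hμ]
            simp only [hφ, norm_mul]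
  refine step2.trans ?_
  rw [MeasureTheory.integral_integral_swap hφi]
  have inner : ∀ y : ℝ, (∫ x, φ (x, y) ∂μ)
      = (∫ x in (0:ℝ)..1, ‖g x‖) * ‖h y‖ := by
    intro y
    have h1 : (∫ x, φ (x, y) ∂μ) = ∫ x in (0:ℝ)..1, ‖g (x - y)‖ * ‖h y‖ := by
      rw [intervalIntegral.integral_of_le zero_le_one, ← hI, ← hμ]
    rw [h1, intervalIntegral.integral_mul_const, shift_integral_norm hgp]
  simp_rw [inner]
  rw [MeasureTheory.integral_const_mul]
  have hhh : (∫ y in (0:ℝ)..1, ‖h y‖) = ∫ y, ‖h y‖ ∂μ := by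
    rw [intervalIntegral.integral_of_le zero_le_one, ← hI, ← hμ]
  have hgg : (∫ x in (0:ℝ)..1, ‖g x‖) = ∫ x, ‖g x‖ ∂μ := by
    rw [intervalIntegral.integral_of_le zero_le_one, ← hI, ← hμ]
  rw [hhh, hgg]

lemma eC_neg (t : ℝ) : (starRingEnd ℂ) (eC t) = eC (-t) := by
  rw [eC, eC, ← Complex.exp_conj]
  congr 1
  simp [Complex.ext_iff]

lemma fhat_im_zero (A : Finset ℤ) (hsym : ∀ a : ℤ, a ∈ A ↔ -a ∈ A) (x : ℝ) :
    (fhat A x).im = 0 := by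
  rw [← Complex.conj_eq_iff_im]
  unfold fhat
  rw [map_sum]
  simp_rw [eC_neg]
  refine Finset.sum_nbij' (fun a => -a) (fun a => -a) ?_ ?_ ?_ ?_ ?_
  · intro a ha; exact (hsym a).mp ha
  · intro a ha; simpa using (hsym (-a)).mpr (by simpa using ha)
  · intro a _; ring
  · intro a _; ring
  · intro a _; congr 1; push_cast; ring

lemma integral_fhat_zero (A : Finset ℤ) (h0 : (0:ℤ) ∉ A) :
    (∫ x in (0:ℝ)..1, fhat A x) = 0 := by
  unfold fhat
  have hint : ∀ a ∈ A, IntervalIntegrable (fun x : ℝ => eC ((a:ℝ) * x))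
      MeasureTheory.volume 0 1 := by
    intro a _
    have : Continuous fun x : ℝ => eC ((a:ℝ) * x) :=
      continuous_eC.comp (by fun_prop)
    exact this.intervalIntegrable 0 1
  rw [intervalIntegral.integral_finset_sum hint]
  refine Finset.sum_eq_zero fun a ha => ?_
  rw [integral_eC a, if_neg (fun (h : a = 0) => h0 (h ▸ ha))]

lemma exists_interp (k : ℕ) (hk : 0 < k) (s : Fin k → ℝ)
    (hinj : Function.Injective s) (hne : ∀ i, s i ≠ 0) :
    ∃ α : Fin k → ℝ, ∀ j, (∑ m : Fin k, α m * s j ^ ((m:ℕ)+1)) =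
      if j = ⟨0,hk⟩ then 1 else 0 := by
  set M : Matrix (Fin k) (Fin k) ℝ := Matrix.of fun j m => s j ^ ((m:ℕ)+1) with hMdef
  have hM : M = Matrix.diagonal s * Matrix.vandermonde s := by
    ext j m
    rw [Matrix.diagonal_mul]
    simp [hMdef, Matrix.vandermonde, pow_succ']
  have hdet : M.det ≠ 0 := by
    rw [hM, Matrix.det_mul, Matrix.det_diagonal, Matrix.det_vandermonde]
    apply mul_ne_zero
    · exact Finset.prod_ne_zero_iff.mpr fun i _ => hne i
    · refine Finset.prod_ne_zero_iff.mpr fun i _ => ?_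
      refine Finset.prod_ne_zero_iff.mpr fun j hj => ?_
      have hji : j ≠ i := (Finset.mem_Ioi.mp hj).ne'
      exact sub_ne_zero.mpr fun h => hji (hinj h)
  set α : Fin k → ℝ := M⁻¹.mulVec (Pi.single ⟨0,hk⟩ 1) with hα
  refine ⟨α, fun j => ?_⟩
  have key : M.mulVec α = Pi.single ⟨0,hk⟩ 1 := by
    rw [hα, Matrix.mulVec_mulVec, Matrix.mul_nonsing_inv _ (Ne.isUnit hdet),
      Matrix.one_mulVec]
  have := congrFun key j
  rw [Matrix.mulVec, dotProduct] at this
  simp only [hMdef, Matrix.of_apply] at this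
  rw [show (∑ m : Fin k, α m * s j ^ ((m:ℕ)+1)) = ∑ m : Fin k, s j ^ ((m:ℕ)+1) * α m from
    Finset.sum_congr rfl fun m _ => mul_comm _ _, this, Pi.single_apply]

lemma integral_fhat_re_zero (A : Finset ℤ) (h0 : (0:ℤ) ∉ A) :
    (∫ x in (0:ℝ)..1, (fhat A x).re) = 0 := by
  have hi : MeasureTheory.IntegrableOn (fhat A) (Set.Ioc (0:ℝ) 1) :=
    (continuous_fhat A).integrableOn_Ioc
  have h1 : (∫ x in Set.Ioc (0:ℝ) 1, (fhat A x).re) = (∫ x in Set.Ioc (0:ℝ) 1, fhat A x).re := by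
    have := integral_re (𝕜 := ℂ) hi
    simpa using this
  rw [intervalIntegral.integral_of_le zero_le_one, h1,
    ← intervalIntegral.integral_of_le zero_le_one, integral_fhat_zero A h0, Complex.zero_re]


/-- If `∑ s_j 1̂_{A^{(j)}} + K ≥ 0` for distinct nonzero reals `s₁, …, s_k`,
then `‖1̂_{A^{(1)}}‖₁ ≤ C·K^k`. -/
theorem l1_bound_A1 (k : ℕ) (hk : 0 < k) (s : Fin k → ℝ)
    (hinj : Function.Injective s) (hne : ∀ i, s i ≠ 0) :
    ∃ C : ℝ, 0 < C ∧
      ∀ A : Fin k → Finset ℤ,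
        (∀ i, (0 : ℤ) ∉ A i) → (∀ i, ∀ a : ℤ, a ∈ A i ↔ -a ∈ A i) →
        (∀ i j, i ≠ j → Disjoint (A i) (A j)) →
        ∀ K : ℝ, 1 ≤ K →
          (∀ x : ℝ, 0 ≤ (∑ j, s j * (fhat (A j) x).re) + K) →
          (∫ x in (0:ℝ)..1, ‖fhat (A ⟨0, hk⟩) x‖) ≤ C * K ^ k := by
  obtain ⟨α, hα⟩ := exists_interp k hk s hinj hne
  refine ⟨(∑ m : Fin k, |α m| * 2 ^ ((m:ℕ)+1)) + 1, by positivity, ?_⟩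
  intro A h0 hsym hdisj K hK hpos
  have hK0 : (0:ℝ) < K := lt_of_lt_of_le one_pos hK
  -- the functions H m
  set H : ℕ → ℝ → ℂ := fun m x => ∑ j, ((s j ^ m : ℝ) : ℂ) * fhat (A j) x with hH
  have hHcont : ∀ m, Continuous (H m) := fun m =>
    continuous_finset_sum _ fun j _ => continuous_const.mul (continuous_fhat (A j))
  have hHper : ∀ m, Function.Periodic (H m) 1 := by
    intro m x
    simp only [hH]
    exact Finset.sum_congr rfl fun j _ => by rw [fhat_periodic (A j) x]
  -- base L1 bound on H 1
  set Fr : ℝ → ℝ := fun x => ∑ j, s j * (fhat (A j) x).re with hFr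
  have hFrcont : Continuous Fr :=
    continuous_finset_sum _ fun j _ =>
      continuous_const.mul (Complex.continuous_re.comp (continuous_fhat (A j)))
  have hH1 : ∀ x, H 1 x = ((Fr x : ℝ) : ℂ) := by
    intro x
    simp only [hH, hFr, pow_one]
    rw [Complex.ofReal_sum]
    refine Finset.sum_congr rfl fun j _ => ?_
    apply Complex.ext
    · rw [Complex.re_ofReal_mul]
      simp
    · rw [Complex.ofReal_mul]
      simp [Complex.ofReal_im, fhat_im_zero (A j) (hsym j) x]
  have hFrint : (∫ x in (0:ℝ)..1, Fr x) = 0 := by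
    simp only [hFr]
    have hint2 : ∀ j ∈ Finset.univ, IntervalIntegrable
        (fun x : ℝ => s j * (fhat (A j) x).re) MeasureTheory.volume 0 1 := by
      intro j _
      have : Continuous fun x : ℝ => s j * (fhat (A j) x).re :=
        continuous_const.mul (Complex.continuous_re.comp (continuous_fhat (A j)))
      exact this.intervalIntegrable 0 1
    rw [intervalIntegral.integral_finset_sum hint2]
    refine Finset.sum_eq_zero fun j _ => ?_
    have : (∫ x in (0:ℝ)..1, s j * (fhat (A j) x).re)
        = s j * ∫ x in (0:ℝ)..1, (fhat (A j) x).re := intervalIntegral.integral_const_mul _ _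
    rw [this, integral_fhat_re_zero (A j) (h0 j), mul_zero]
  have hbase : (∫ x in (0:ℝ)..1, ‖H 1 x‖) ≤ 2 * K := by
    have habs : ∀ x, ‖H 1 x‖ = |Fr x| := by
      intro x; rw [hH1 x, Complex.norm_real, Real.norm_eq_abs]
    calc (∫ x in (0:ℝ)..1, ‖H 1 x‖) = ∫ x in (0:ℝ)..1, |Fr x| := by simp_rw [habs]
      _ ≤ ∫ x in (0:ℝ)..1, (Fr x + 2*K) := by
          apply intervalIntegral.integral_mono_on zero_le_one
          · exact (hFrcont.abs).intervalIntegrable 0 1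
          · exact (hFrcont.add continuous_const).intervalIntegrable 0 1
          · intro x _
            have := hpos x
            rw [abs_le]
            constructor <;> [skip; skip] <;> simp only [hFr] at this ⊢ <;> nlinarith
      _ = 2*K := by
          rw [intervalIntegral.integral_add (hFrcont.intervalIntegrable 0 1)
            (intervalIntegrable_const), hFrint, intervalIntegral.integral_const]
          simp
  -- inductive step
  have hstep : ∀ n : ℕ, ∀ x : ℝ, H (n+2) x = ∫ y in (0:ℝ)..1, H (n+1) (x - y) * H 1 y := by
    intro n x
    have hexp : ∀ y : ℝ, H (n+1) (x - y) * H 1 y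
        = ∑ i, ∑ j, ((s i ^ (n+1) * s j : ℝ) : ℂ) * (fhat (A i) (x - y) * fhat (A j) y) := by
      intro y
      simp only [hH, pow_one]
      rw [Finset.sum_mul_sum]
      refine Finset.sum_congr rfl fun i _ => Finset.sum_congr rfl fun j _ => ?_
      push_cast; ring
    simp_rw [hexp]
    have hint3 : ∀ i ∈ (Finset.univ : Finset (Fin k)), IntervalIntegrable
        (fun y : ℝ => ∑ j, ((s i ^ (n+1) * s j : ℝ) : ℂ) * (fhat (A i) (x - y) * fhat (A j) y))
        MeasureTheory.volume 0 1 := by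
      intro i _
      refine (continuous_finset_sum _ fun j _ => ?_).intervalIntegrable 0 1
      exact continuous_const.mul (((continuous_fhat (A i)).comp
        (continuous_const.sub continuous_id)).mul (continuous_fhat (A j)))
    rw [intervalIntegral.integral_finset_sum hint3]
    have hinner : ∀ i : Fin k,
        (∫ y in (0:ℝ)..1, ∑ j, ((s i ^ (n+1) * s j : ℝ) : ℂ) * (fhat (A i) (x - y) * fhat (A j) y))
        = ((s i ^ (n+2) : ℝ) : ℂ) * fhat (A i) x := by
      intro i
      have hint4 : ∀ j ∈ (Finset.univ : Finset (Fin k)), IntervalIntegrable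
          (fun y : ℝ => ((s i ^ (n+1) * s j : ℝ) : ℂ) * (fhat (A i) (x - y) * fhat (A j) y))
          MeasureTheory.volume 0 1 := by
        intro j _
        refine (continuous_const.mul (((continuous_fhat (A i)).comp
          (continuous_const.sub continuous_id)).mul (continuous_fhat (A j)))).intervalIntegrable 0 1
      rw [intervalIntegral.integral_finset_sum hint4]
      have hterm : ∀ j : Fin k,
          (∫ y in (0:ℝ)..1, ((s i ^ (n+1) * s j : ℝ) : ℂ) * (fhat (A i) (x - y) * fhat (A j) y))
          = ((s i ^ (n+1) * s j : ℝ) : ℂ) * fhat (A i ∩ A j) x := by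
        intro j
        rw [intervalIntegral.integral_const_mul, conv_fhat]
      rw [Finset.sum_congr rfl (fun j _ => hterm j)]
      rw [Finset.sum_eq_single_of_mem i (Finset.mem_univ i)]
      · rw [Finset.inter_self, show s i ^ (n+1) * s i = s i ^ (n+2) from by ring]
      · intro j _ hji
        have : A i ∩ A j = ∅ :=
          Finset.disjoint_iff_inter_eq_empty.mp (hdisj i j (Ne.symm hji))
        rw [this]
        simp [fhat]
    rw [Finset.sum_congr rfl (fun i _ => hinner i)]
  -- L1 bounds for all H (n+1)
  have hQ : ∀ n : ℕ, (∫ x in (0:ℝ)..1, ‖H (n+1) x‖) ≤ (2*K) ^ (n+1) := by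
    intro n
    induction n with
    | zero => simpa using hbase
    | succ n ih =>
        have hid : (∫ x in (0:ℝ)..1, ‖H (n+2) x‖)
            = ∫ x in (0:ℝ)..1, ‖∫ y in (0:ℝ)..1, H (n+1) (x - y) * H 1 y‖ := by
          refine intervalIntegral.integral_congr fun x _ => ?_
          rw [hstep n x]
        rw [hid]
        calc (∫ x in (0:ℝ)..1, ‖∫ y in (0:ℝ)..1, H (n+1) (x - y) * H 1 y‖)
            ≤ (∫ x in (0:ℝ)..1, ‖H (n+1) x‖) * (∫ y in (0:ℝ)..1, ‖H 1 y‖) :=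
              conv_l1 _ _ (hHcont (n+1)) (hHcont 1) (hHper (n+1))
          _ ≤ (2*K)^(n+1) * (2*K) := by
              apply mul_le_mul ih hbase
              · exact intervalIntegral.integral_nonneg zero_le_one fun x _ => norm_nonneg _
              · positivity
          _ = (2*K)^(n+2) := by ring
  -- decomposition of fhat (A ⟨0,hk⟩)
  have hdecomp : ∀ x : ℝ, fhat (A ⟨0,hk⟩) x = ∑ m : Fin k, ((α m : ℝ) : ℂ) * H ((m:ℕ)+1) x := by
    intro x
    have : ∀ m : Fin k, ((α m : ℝ) : ℂ) * H ((m:ℕ)+1) x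
        = ∑ j, ((α m * s j ^ ((m:ℕ)+1) : ℝ) : ℂ) * fhat (A j) x := by
      intro m
      simp only [hH, Finset.mul_sum]
      refine Finset.sum_congr rfl fun j _ => ?_
      push_cast; ring
    rw [Finset.sum_congr rfl fun m _ => this m, Finset.sum_comm]
    have hcol : ∀ j : Fin k,
        (∑ m : Fin k, ((α m * s j ^ ((m:ℕ)+1) : ℝ) : ℂ) * fhat (A j) x)
        = ((if j = ⟨0,hk⟩ then (1:ℝ) else 0 : ℝ) : ℂ) * fhat (A j) x := by
      intro j
      rw [← Finset.sum_mul]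
      congr 1
      rw [← Complex.ofReal_sum, hα j]
    rw [Finset.sum_congr rfl fun j _ => hcol j]
    simp only [apply_ite (Complex.ofReal), Complex.ofReal_one, Complex.ofReal_zero,
      ite_mul, one_mul, zero_mul, Finset.sum_ite_eq', Finset.mem_univ, if_true]
  -- final bound
  have hfin : (∫ x in (0:ℝ)..1, ‖fhat (A ⟨0,hk⟩) x‖)
      ≤ ∑ m : Fin k, |α m| * (2*K)^((m:ℕ)+1) := by
    calc (∫ x in (0:ℝ)..1, ‖fhat (A ⟨0,hk⟩) x‖)
        ≤ ∫ x in (0:ℝ)..1, ∑ m : Fin k, |α m| * ‖H ((m:ℕ)+1) x‖ := by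
          apply intervalIntegral.integral_mono_on zero_le_one
          · exact ((continuous_fhat _).norm).intervalIntegrable 0 1
          · refine (continuous_finset_sum _ fun m _ => ?_).intervalIntegrable 0 1
            exact continuous_const.mul ((hHcont _).norm)
          · intro x _
            rw [hdecomp x]
            refine (norm_sum_le _ _).trans ?_
            refine Finset.sum_le_sum fun m _ => ?_
            rw [norm_mul, Complex.norm_real, Real.norm_eq_abs]
      _ = ∑ m : Fin k, |α m| * ∫ x in (0:ℝ)..1, ‖H ((m:ℕ)+1) x‖ := by
          have hint5 : ∀ m ∈ (Finset.univ : Finset (Fin k)), IntervalIntegrable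
              (fun x : ℝ => |α m| * ‖H ((m:ℕ)+1) x‖) MeasureTheory.volume 0 1 := by
            intro m _
            exact (continuous_const.mul ((hHcont ((m:ℕ)+1)).norm)).intervalIntegrable 0 1
          rw [intervalIntegral.integral_finset_sum hint5]
          exact Finset.sum_congr rfl fun m _ => intervalIntegral.integral_const_mul _ _
      _ ≤ ∑ m : Fin k, |α m| * (2*K)^((m:ℕ)+1) := by
          refine Finset.sum_le_sum fun m _ => ?_
          exact mul_le_mul_of_nonneg_left (hQ (m:ℕ)) (abs_nonneg _)
  have habs : (∫ x in (0:ℝ)..1, ‖fhat (A ⟨0,hk⟩) x‖)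
      = ∫ x in (0:ℝ)..1, ‖fhat (A ⟨0,hk⟩) x‖ := by
    rfl
  rw [habs]
  refine hfin.trans ?_
  have hKk : ∀ m : Fin k, (2*K)^((m:ℕ)+1) ≤ 2^((m:ℕ)+1) * K^k := by
    intro m
    rw [mul_pow]
    refine mul_le_mul_of_nonneg_left ?_ (by positivity)
    exact pow_le_pow_right₀ hK (by omega)
  calc (∑ m : Fin k, |α m| * (2*K)^((m:ℕ)+1))
      ≤ ∑ m : Fin k, |α m| * (2^((m:ℕ)+1) * K^k) := by
        refine Finset.sum_le_sum fun m _ => ?_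
        exact mul_le_mul_of_nonneg_left (hKk m) (abs_nonneg _)
    _ = (∑ m : Fin k, |α m| * 2^((m:ℕ)+1)) * K^k := by
        rw [Finset.sum_mul]
        exact Finset.sum_congr rfl fun m _ => by ring
    _ ≤ ((∑ m : Fin k, |α m| * 2 ^ ((m:ℕ)+1)) + 1) * K^k := by
        refine mul_le_mul_of_nonneg_right (by linarith) (by positivity)
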